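/- Let n ≥ 2 and let A ⊆ ℝⁿ be a nonempty closed convex set. The following are equivalent: (i) A is spindle convex; (ii) A equals the intersection of all closed unit balls containing it, i.e. A = ⋂ {closed unit ball with center c : A ⊆ that ball} (where the intersection over the empty family is ℝⁿ), equivalently A = B[B[A]]; (iii) for every point x in the topological boundary of A there exists c ∈ ℝⁿ with A ⊆ {y : ‖y − c‖ ≤ 1} and ‖x − c‖ = 1 (a closed unit ball supporting A at x). -/

import Mathlib

noncomputable section

/-- `B[X]`: the intersection of all closed unit balls centered at points of `X`
(`Set.univ` when `X = ∅`). -/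
def ballInter {n : ℕ} (X : Set (EuclideanSpace ℝ (Fin n))) :
    Set (EuclideanSpace ℝ (Fin n)) :=
  ⋂ x ∈ X, Metric.closedBall x 1

/-- The closed spindle `[a,b]_s`: `B[B[{a,b}]]` if `dist a b ≤ 2`, all of the space
otherwise. -/
def spindle {n : ℕ} (a b : EuclideanSpace ℝ (Fin n)) :
    Set (EuclideanSpace ℝ (Fin n)) :=
  if dist a b ≤ 2 then ballInter (ballInter {a, b}) else Set.univ

/-- A set is spindle convex if it contains the closed spindle of any two of its points. -/
def SpindleConvex {n : ℕ} (C : Set (EuclideanSpace ℝ (Fin n))) : Prop :=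
  ∀ a ∈ C, ∀ b ∈ C, spindle a b ⊆ C

/-- The spindle convex hull: the intersection of all spindle convex sets containing `X`. -/
def spindleHull {n : ℕ} (X : Set (EuclideanSpace ℝ (Fin n))) :
    Set (EuclideanSpace ℝ (Fin n)) :=
  ⋂₀ {C : Set (EuclideanSpace ℝ (Fin n)) | X ⊆ C ∧ SpindleConvex C}

/-- Arc-distance `ρ(a,b) = 2 · arcsin(‖a - b‖ / 2)`. -/
def arcDist {n : ℕ} (a b : EuclideanSpace ℝ (Fin n)) : ℝ :=
  2 * Real.arcsin (dist a b / 2)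

set_option maxHeartbeats 1000000

section Aux
open RealInnerProductSpace Metric Set

variable {n : ℕ}

-- projection inequality
lemma proj_inner_le {A : Set (EuclideanSpace ℝ (Fin n))} (hconv : Convex ℝ A)
    {p q : EuclideanSpace ℝ (Fin n)} (hp : p ∈ A)
    (hmin : ∀ w ∈ A, dist q p ≤ dist q w) :
    ∀ w ∈ A, ⟪q - p, w - p⟫ ≤ 0 := by
  intro w hw
  by_contra hpos
  push_neg at hpos
  set ε : ℝ := ⟪q - p, w - p⟫ with hε
  have hm0 : (0:ℝ) < ‖w - p‖ ^ 2 := by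
    rcases eq_or_ne w p with rfl | hne
    · rw [hε, sub_self, inner_zero_right] at hpos; exact absurd hpos (lt_irrefl 0)
    · have h1 : (0:ℝ) < ‖w - p‖ := norm_sub_pos_iff.mpr hne
      positivity
  set m : ℝ := ‖w - p‖ ^ 2 with hm
  set t : ℝ := min 1 (ε / m) with ht
  have ht0 : 0 < t := lt_min one_pos (div_pos hpos hm0)
  have ht1 : t ≤ 1 := min_le_left _ _
  have htm : t * m ≤ ε := by
    calc t * m ≤ (ε / m) * m := by
          apply mul_le_mul_of_nonneg_right (min_le_right _ _) hm0.le
      _ = ε := by field_simp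
  have hptA : p + t • (w - p) ∈ A := by
    have := hconv hp hw (by linarith : (0:ℝ) ≤ 1 - t) ht0.le (by ring)
    convert this using 1
    module
  have hd := hmin _ hptA
  rw [dist_eq_norm, dist_eq_norm] at hd
  have hexp : ‖q - (p + t • (w - p))‖ ^ 2 = ‖q - p‖ ^ 2 - 2 * t * ε + t ^ 2 * m := by
    have : q - (p + t • (w - p)) = (q - p) - t • (w - p) := by abel
    rw [this, norm_sub_sq_real, real_inner_smul_right, norm_smul, Real.norm_eq_abs,
      mul_pow, sq_abs]
    rw [← hε, ← hm]
    ring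
  have hsq : ‖q - p‖ ^ 2 ≤ ‖q - (p + t • (w - p))‖ ^ 2 := by
    have h1 := norm_nonneg (q - p)
    nlinarith
  rw [hexp] at hsq
  nlinarith


lemma le_one_of_sq_le_one {x : ℝ} (h0 : 0 ≤ x) (h : x ^ 2 ≤ 1) : x ≤ 1 := by nlinarith

lemma lemS (u a : EuclideanSpace ℝ (Fin n)) (hu : ‖u‖ = 1) (ha2 : ‖a‖ ≤ 2)
    (hup : ⟪u, a⟫ ≤ 0) (hout : 1 < ‖a + u‖) :
    ∃ z, 0 < ⟪u, z⟫ ∧ ∀ c', ‖c'‖ ≤ 1 → ‖c' - a‖ ≤ 1 → ‖z - c'‖ ≤ 1 := by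
  set α : ℝ := -⟪u, a⟫ with hα
  set L : ℝ := ‖a‖ with hLdef
  have hα0 : 0 ≤ α := by rw [hα]; linarith
  have hαL : α ≤ L := by
    have h1 : |⟪u, a⟫| ≤ ‖u‖ * ‖a‖ := abs_real_inner_le_norm u a
    rw [hu, one_mul] at h1
    have := neg_le_of_abs_le h1
    rw [hα]; linarith
  have hα' : ⟪a, u⟫ = -α := by rw [hα, neg_neg]; exact real_inner_comm u a
  have hα'' : ⟪u, a⟫ = -α := by rw [hα, neg_neg]
  have hkey : 2 * α < L ^ 2 := by
    have h2 : ‖a + u‖ ^ 2 = L ^ 2 - 2 * α + 1 := by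
      rw [norm_add_sq_real, hu, hα']; ring
    nlinarith [hout, norm_nonneg (a + u)]
  have hL0 : 0 < L := by nlinarith
  have hexp : ∀ s t : ℝ, ‖s • a - t • u‖ ^ 2 = s ^ 2 * L ^ 2 + 2 * s * t * α + t ^ 2 := by
    intro s t
    rw [norm_sub_sq_real, norm_smul, norm_smul, real_inner_smul_left, real_inner_smul_right,
      Real.norm_eq_abs, Real.norm_eq_abs, mul_pow, mul_pow, sq_abs, sq_abs, hu]
    rw [hα']
    ring
  rcases lt_or_eq_of_le ha2 with hL2 | hL2
  · -- case L < 2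
    have hβ2 : 0 < L ^ 2 - α ^ 2 := by nlinarith
    set τ : ℝ := Real.sqrt (L ^ 2 * (4 - L ^ 2) / (4 * (L ^ 2 - α ^ 2))) with hτdef
    have h4L : 0 < 4 - L ^ 2 := by nlinarith
    have harg : 0 < L ^ 2 * (4 - L ^ 2) / (4 * (L ^ 2 - α ^ 2)) := by
      exact div_pos (mul_pos (by positivity) h4L) (by positivity)
    have hτ0 : 0 < τ := Real.sqrt_pos.mpr harg
    have hτsq : τ ^ 2 = L ^ 2 * (4 - L ^ 2) / (4 * (L ^ 2 - α ^ 2)) := Real.sq_sqrt harg.le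
    have hτ1 : τ < 1 := by
      have h4 : τ ^ 2 < 1 := by
        rw [hτsq, div_lt_one (by positivity)]
        nlinarith
      nlinarith
    set σ : ℝ := 1 / 2 - τ * α / L ^ 2 with hσdef
    have hσ0 : 0 ≤ σ := by
      rw [hσdef, sub_nonneg, div_le_iff₀ (by positivity)]
      nlinarith [mul_le_of_le_one_left hα0 hτ1.le]
    have hσ1 : σ ≤ 1 := by
      rw [hσdef]
      have : 0 ≤ τ * α / L ^ 2 := by positivity
      linarith
    have hLne : L ≠ 0 := ne_of_gt hL0
    have hne2 : L ^ 2 - α ^ 2 ≠ 0 := ne_of_gt hβ2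
    have q2 : τ ^ 2 * (L ^ 2 - α ^ 2) / L ^ 2 = (4 - L ^ 2) * (L ^ 2 - α ^ 2) / (L ^ 2 * (L ^ 2 - α ^ 2)) * (L ^ 2 / 4) := by
      rw [hτsq]; field_simp
    have q2' : τ ^ 2 * (L ^ 2 - α ^ 2) / L ^ 2 = (4 - L ^ 2) / 4 := by
      rw [q2]; field_simp
    clear_value τ
    set cm : EuclideanSpace ℝ (Fin n) := σ • a - τ • u with hcm
    clear_value cm
    have h_c1 : ‖cm‖ ^ 2 = 1 := by
      rw [hcm, hexp σ τ]
      have q1 : σ ^ 2 * L ^ 2 + 2 * σ * τ * α + τ ^ 2 = L ^ 2 / 4 + τ ^ 2 * (L ^ 2 - α ^ 2) / L ^ 2 := by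
        rw [hσdef]; field_simp; ring
      rw [q1, q2']; ring_nf
    have h_c2 : ‖cm - a‖ ^ 2 = 1 := by
      have : cm - a = (σ - 1) • a - τ • u := by rw [hcm]; module
      rw [this, hexp (σ - 1) τ]
      have q1 : (σ - 1) ^ 2 * L ^ 2 + 2 * (σ - 1) * τ * α + τ ^ 2 = L ^ 2 / 4 + τ ^ 2 * (L ^ 2 - α ^ 2) / L ^ 2 := by
        rw [hσdef]; field_simp; ring
      rw [q1, q2']; ring_nf
    refine ⟨cm + u, ?_, ?_⟩
    · have h5 : ⟪u, cm + u⟫ = 1 - τ - σ * α := by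
        rw [hcm, inner_add_right, inner_sub_right, real_inner_smul_right, real_inner_smul_right,
          real_inner_self_eq_norm_sq, hu, hα'']
        ring
      rw [h5]
      have e1 : (2 * τ * (L ^ 2 - α ^ 2)) ^ 2 = L ^ 2 * (4 - L ^ 2) * (L ^ 2 - α ^ 2) := by
        rw [mul_pow, mul_pow, hτsq]
        field_simp
        ring
      have hX : 0 ≤ 2 * τ * (L ^ 2 - α ^ 2) := by
        have := mul_nonneg hτ0.le hβ2.le
        linarith
      have hY : 0 < L ^ 2 * (2 - α) := by
        have h2α : 0 < 2 - α := by nlinarith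
        positivity
      have hid : (L ^ 2 * (2 - α)) ^ 2 = L ^ 2 * (4 - L ^ 2) * (L ^ 2 - α ^ 2) + L ^ 2 * (L ^ 2 - 2 * α) ^ 2 := by
        ring
      have hpos2 : 0 < L ^ 2 * (L ^ 2 - 2 * α) ^ 2 := by
        have h2 : 0 < L ^ 2 - 2 * α := by linarith
        positivity
      have hsq : (2 * τ * (L ^ 2 - α ^ 2)) ^ 2 < (L ^ 2 * (2 - α)) ^ 2 := by
        rw [e1, hid]; linarith
      have e2 : 2 * τ * (L ^ 2 - α ^ 2) < L ^ 2 * (2 - α) := by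
        nlinarith [hsq, hX, hY]
      have e3 : 1 - τ - σ * α = (L ^ 2 * (2 - α) - 2 * τ * (L ^ 2 - α ^ 2)) / (2 * L ^ 2) := by
        rw [hσdef]; field_simp; ring
      rw [e3]
      exact div_pos (by linarith) (by positivity)
    · intro c' h1 h2
      clear hτdef hτsq harg q2 q2' hkey hexp hβ2 h4L hLne hne2 hup hout ha2 hαL hα0
      clear hα hα' hα'' hLdef hσdef
      set w : EuclideanSpace ℝ (Fin n) := c' - cm with hw
      clear_value w
      have hc' : c' = cm + w := by rw [hw]; abel
      have e1 : ‖c'‖ ^ 2 = 1 + 2 * ⟪cm, w⟫ + ‖w‖ ^ 2 := by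
        rw [hc', norm_add_sq_real, h_c1]
      have e2 : ‖c' - a‖ ^ 2 = 1 + 2 * ⟪cm - a, w⟫ + ‖w‖ ^ 2 := by
        have : c' - a = (cm - a) + w := by rw [hc']; abel
        rw [this, norm_add_sq_real, h_c2]
      have e3 : ‖cm + u - c'‖ ^ 2 = 1 - 2 * ⟪u, w⟫ + ‖w‖ ^ 2 := by
        have : cm + u - c' = u - w := by rw [hc']; abel
        rw [this, norm_sub_sq_real, hu]
        ring
      have e4 : ⟪cm - a, w⟫ = ⟪cm, w⟫ - ⟪a, w⟫ := inner_sub_left cm a w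
      have e5 : σ * ⟪a, w⟫ = ⟪cm, w⟫ + τ * ⟪u, w⟫ := by
        have : (σ • a : EuclideanSpace ℝ (Fin n)) = cm + τ • u := by rw [hcm]; abel
        calc σ * ⟪a, w⟫ = ⟪σ • a, w⟫ := (real_inner_smul_left a w σ).symm
          _ = ⟪cm + τ • u, w⟫ := by rw [this]
          _ = ⟪cm, w⟫ + τ * ⟪u, w⟫ := by rw [inner_add_left, real_inner_smul_left]
      have i1 : ‖c'‖ ^ 2 ≤ 1 := by nlinarith [norm_nonneg c', h1]
      have i2 : ‖c' - a‖ ^ 2 ≤ 1 := by nlinarith [norm_nonneg (c' - a), h2]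
      have j1 : 2 * ⟪cm, w⟫ + ‖w‖ ^ 2 ≤ 0 := by linarith [e1, i1]
      have j2 : 2 * ⟪cm, w⟫ - 2 * ⟪a, w⟫ + ‖w‖ ^ 2 ≤ 0 := by linarith [e2, i2, e4]
      have j3 : 2 * ⟪cm, w⟫ - 2 * (σ * ⟪a, w⟫) + ‖w‖ ^ 2 ≤ 0 := by
        nlinarith [mul_nonneg (sub_nonneg.mpr hσ1) (neg_nonneg.mpr j1),
          mul_nonneg hσ0 (neg_nonneg.mpr j2)]
      have j4 : ‖w‖ ^ 2 ≤ 2 * (τ * ⟪u, w⟫) := by linarith [j3, e5]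
      have hP : 0 ≤ ⟪u, w⟫ := by
        by_contra hPneg
        push_neg at hPneg
        nlinarith [j4, sq_nonneg ‖w‖, mul_pos hτ0 (neg_pos.mpr hPneg)]
      have j5 : ‖w‖ ^ 2 ≤ 2 * ⟪u, w⟫ := by
        nlinarith [j4, mul_nonneg (sub_nonneg.mpr hτ1.le) hP]
      have key : ‖cm + u - c'‖ ^ 2 ≤ 1 := by rw [e3]; linarith
      exact le_one_of_sq_le_one (norm_nonneg _) key
  · -- case L = 2
    refine ⟨(1 / 2 : ℝ) • a + u, ?_, ?_⟩
    · rw [inner_add_right, real_inner_smul_right, real_inner_self_eq_norm_sq, hu, hα'']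
      nlinarith [hkey, hL2]
    · intro c' h1 h2
      have htri : ‖a‖ ≤ ‖c'‖ + ‖c' - a‖ := by
        have hca : c' - (c' - a) = a := by abel
        calc ‖a‖ = ‖c' - (c' - a)‖ := by rw [hca]
          _ ≤ ‖c'‖ + ‖c' - a‖ := norm_sub_le _ _
      have hc1 : ‖c'‖ = 1 := by rw [← hLdef] at htri; linarith
      have hc2 : ‖c' - a‖ = 1 := by rw [← hLdef] at htri; linarith
      have hinner : ⟪c', a⟫ = 2 := by
        have := norm_sub_sq_real c' a
        rw [hc1, hc2, ← hLdef, hL2] at this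
        nlinarith
      have hc'eq : c' = (1 / 2 : ℝ) • a := by
        have hz : ‖c' - (1 / 2 : ℝ) • a‖ ^ 2 = 0 := by
          rw [norm_sub_sq_real, real_inner_smul_right, norm_smul, Real.norm_eq_abs, mul_pow, sq_abs,
            hc1, hinner, ← hLdef, hL2]
          norm_num
        have := pow_eq_zero_iff (n := 2) (by norm_num) |>.mp hz
        rwa [norm_eq_zero, sub_eq_zero] at this
      have : (1 / 2 : ℝ) • a + u - c' = u := by rw [hc'eq]; abel
      rw [this, hu]

end Aux

open RealInnerProductSpace Metric Set

theorem spindleConvex_tfae (n : ℕ) (hn : 2 ≤ n)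
    (A : Set (EuclideanSpace ℝ (Fin n))) (hne : A.Nonempty) (hcl : IsClosed A)
    (hconv : Convex ℝ A) :
    (SpindleConvex A ↔
      A = ⋂ c ∈ {c : EuclideanSpace ℝ (Fin n) | A ⊆ Metric.closedBall c 1},
        Metric.closedBall c 1) ∧
    ((A = ⋂ c ∈ {c : EuclideanSpace ℝ (Fin n) | A ⊆ Metric.closedBall c 1},
        Metric.closedBall c 1) ↔
      ∀ x ∈ frontier A, ∃ c, A ⊆ Metric.closedBall c 1 ∧ dist x c = 1) := by
  classical
  set S : Set (EuclideanSpace ℝ (Fin n)) := {c | A ⊆ Metric.closedBall c 1} with hS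
  have hsub : A ⊆ ⋂ c ∈ S, closedBall c 1 := by
    intro x hx
    exact mem_iInter₂.mpr fun c hc => hc hx
  -- key construction: from q ∉ A, get projection data
  have hproj : ∀ q : EuclideanSpace ℝ (Fin n), q ∉ A →
      ∃ (p : EuclideanSpace ℝ (Fin n)) (d : ℝ) (u : EuclideanSpace ℝ (Fin n)),
        p ∈ A ∧ 0 < d ∧ ‖u‖ = 1 ∧ q - p = d • u ∧ (∀ w ∈ A, ⟪u, w - p⟫ ≤ 0) ∧
        dist q p = d := by
    intro q hq
    obtain ⟨p, hpA, hpd⟩ := hcl.exists_infDist_eq_dist hne q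
    have hd0 : 0 < dist q p := hpd ▸ (hcl.notMem_iff_infDist_pos hne).mp hq
    have hmin : ∀ w ∈ A, dist q p ≤ dist q w := fun w hw =>
      hpd ▸ infDist_le_dist_of_mem hw
    have hpr := proj_inner_le hconv hpA hmin
    refine ⟨p, dist q p, (dist q p)⁻¹ • (q - p), hpA, hd0, ?_, ?_, ?_, rfl⟩
    · rw [norm_smul, Real.norm_eq_abs, abs_of_pos (inv_pos.mpr hd0), ← dist_eq_norm]
      field_simp
    · rw [smul_smul]
      rw [mul_inv_cancel₀ hd0.ne', one_smul]
    · intro w hw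
      rw [real_inner_smul_left]
      have := hpr w hw
      have h2 : 0 < (dist q p)⁻¹ := inv_pos.mpr hd0
      exact mul_nonpos_of_nonneg_of_nonpos h2.le this
  -- (ii) → (i)
  have h21 : (A = ⋂ c ∈ S, closedBall c 1) → SpindleConvex A := by
    intro h2 a ha b hb
    by_cases hSne : S.Nonempty
    · obtain ⟨c, hcS⟩ := hSne
      have hac : dist a c ≤ 1 := mem_closedBall.mp (hcS ha)
      have hbc : dist b c ≤ 1 := mem_closedBall.mp (hcS hb)
      have hab : dist a b ≤ 2 := by
        calc dist a b ≤ dist a c + dist c b := dist_triangle a c b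
          _ ≤ 1 + 1 := add_le_add hac (dist_comm c b ▸ hbc)
          _ = 2 := by norm_num
      rw [spindle, if_pos hab]
      intro y hy
      rw [h2]
      refine mem_iInter₂.mpr fun c' hc' => ?_
      have hc'm : c' ∈ ballInter {a, b} := by
        refine mem_iInter₂.mpr fun x hx => ?_
        rcases hx with rfl | rfl
        · exact mem_closedBall.mpr (dist_comm c' x ▸ mem_closedBall.mp (hc' ha))
        · exact mem_closedBall.mpr (dist_comm c' x ▸ mem_closedBall.mp (hc' hb))
      exact mem_iInter₂.mp hy c' hc'm
    · have hSempty : S = ∅ := not_nonempty_iff_eq_empty.mp hSne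
      have : A = univ := by rw [h2, hSempty]; simp
      rw [this]
      exact subset_univ _
  -- (i) → (ii)
  have h12 : SpindleConvex A → (A = ⋂ c ∈ S, closedBall c 1) := by
    intro hsp
    refine Subset.antisymm hsub ?_
    intro q hq
    by_contra hqA
    obtain ⟨p, d, u, hpA, hd0, hu1, hqp, hupx, hdqp⟩ := hproj q hqA
    -- A is contained in ball around p - u
    have hball : ∀ x ∈ A, dist x (p - u) ≤ 1 := by
      intro x hx
      by_contra hgt
      push_neg at hgt
      by_cases hdx : dist p x ≤ 2
      · have hax : ‖x - p‖ ≤ 2 := by rw [← dist_eq_norm, dist_comm]; exact hdx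
        have hout : 1 < ‖(x - p) + u‖ := by
          have : x - p + u = x - (p - u) := by abel
          rw [this, ← dist_eq_norm]
          exact hgt
        obtain ⟨z₀, hz₀pos, hz₀⟩ := lemS u (x - p) hu1 hax (hupx x hx) hout
        have hzsp : p + z₀ ∈ spindle p x := by
          rw [spindle, if_pos hdx]
          refine mem_iInter₂.mpr fun c hc => ?_
          have hcp : dist c p ≤ 1 := mem_closedBall.mp (mem_iInter₂.mp hc p (by simp))
          have hcx : dist c x ≤ 1 := mem_closedBall.mp (mem_iInter₂.mp hc x (by simp))
          have e1 : ‖c - p‖ ≤ 1 := by rw [← dist_eq_norm]; exact hcp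
          have e2 : ‖(c - p) - (x - p)‖ ≤ 1 := by
            have : (c - p) - (x - p) = c - x := by abel
            rw [this, ← dist_eq_norm]; exact hcx
          have := hz₀ (c - p) e1 e2
          rw [mem_closedBall, dist_eq_norm]
          have e3 : p + z₀ - c = z₀ - (c - p) := by abel
          rw [e3]
          exact this
        have hzA : p + z₀ ∈ A := hsp p hpA x hx hzsp
        have := hupx (p + z₀) hzA
        have e4 : p + z₀ - p = z₀ := by abel
        rw [e4] at this
        linarith
      · push_neg at hdx
        have huniv : spindle p x = univ := by rw [spindle, if_neg (not_le.mpr hdx)]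
        have : q ∈ A := hsp p hpA x hx (huniv ▸ mem_univ q)
        exact hqA this
    have hcS : (p - u) ∈ S := fun x hx => mem_closedBall.mpr (hball x hx)
    have hqle : dist q (p - u) ≤ 1 := mem_closedBall.mp (mem_iInter₂.mp hq (p - u) hcS)
    have : dist q (p - u) = d + 1 := by
      rw [dist_eq_norm]
      have e5 : q - (p - u) = d • u + u := by rw [← hqp]; abel
      have e6 : (d • u + u : EuclideanSpace ℝ (Fin n)) = (d + 1) • u := by module
      rw [e5, e6, norm_smul, Real.norm_eq_abs, abs_of_pos (by linarith), hu1, mul_one]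
    linarith
  -- (ii) → (iii)
  have h23 : (A = ⋂ c ∈ S, closedBall c 1) →
      ∀ x ∈ frontier A, ∃ c, A ⊆ Metric.closedBall c 1 ∧ dist x c = 1 := by
    intro h2 x hx
    by_cases hSne : S.Nonempty
    · have hScl : IsClosed S := by
        have : S = ⋂ y ∈ A, {c : EuclideanSpace ℝ (Fin n) | dist y c ≤ 1} := by
          ext c
          simp only [hS, mem_setOf_eq, mem_iInter₂, subset_def, mem_closedBall]
        rw [this]
        exact isClosed_biInter fun y _ =>
          isClosed_le (Continuous.dist continuous_const continuous_id) continuous_const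
      have hSbd : Bornology.IsBounded S := by
        obtain ⟨a₀, ha₀⟩ := hne
        refine (isBounded_closedBall (x := a₀) (r := 1)).subset fun c hc => ?_
        have := mem_closedBall.mp (hc ha₀)
        exact mem_closedBall.mpr (dist_comm c a₀ ▸ this)
      have hScp : IsCompact S := Metric.isCompact_of_isClosed_isBounded hScl hSbd
      obtain ⟨cs, hcsS, hmax⟩ := hScp.exists_isMaxOn hSne
        ((continuous_const.dist continuous_id).continuousOn (s := S))
      have hxA : x ∈ A := hcl.closure_eq ▸ hx.1
      have hle1 : dist x cs ≤ 1 := mem_closedBall.mp (hcsS hxA)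
      rcases eq_or_lt_of_le hle1 with heq | hlt
      · exact ⟨cs, hcsS, heq⟩
      · exfalso
        have hball : ball x (1 - dist x cs) ⊆ A := by
          intro y hy
          rw [h2]
          refine mem_iInter₂.mpr fun c hcS2 => mem_closedBall.mpr ?_
          have h3 : dist x c ≤ dist x cs := hmax hcS2
          have h4 : dist y x < 1 - dist x cs := mem_ball.mp hy
          calc dist y c ≤ dist y x + dist x c := dist_triangle y x c
            _ ≤ dist y x + dist x cs := by linarith
            _ ≤ 1 := by linarith
        have hxint : x ∈ interior A :=
          mem_interior.mpr ⟨ball x (1 - dist x cs), hball, isOpen_ball,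
            mem_ball_self (by linarith)⟩
        exact hx.2 hxint
    · exfalso
      have hSempty : S = ∅ := not_nonempty_iff_eq_empty.mp hSne
      have hAuniv : A = univ := by rw [h2, hSempty]; simp
      rw [hAuniv, frontier_univ] at hx
      exact hx
  -- (iii) → (ii)
  have h32 : (∀ x ∈ frontier A, ∃ c, A ⊆ Metric.closedBall c 1 ∧ dist x c = 1) →
      (A = ⋂ c ∈ S, closedBall c 1) := by
    intro h3
    refine Subset.antisymm hsub ?_
    intro q hq
    by_contra hqA
    have hqle : ∀ c ∈ S, dist q c ≤ 1 := fun c hc =>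
      mem_closedBall.mp (mem_iInter₂.mp hq c hc)
    obtain ⟨p, d, u, hpA, hd0, hu1, hqp, hupx, hdqp⟩ := hproj q hqA
    -- p is in the frontier of A
    have hpfr : p ∈ frontier A := by
      refine ⟨subset_closure hpA, fun hpint => ?_⟩
      obtain ⟨ε, hε0, hεball⟩ := Metric.isOpen_iff.mp isOpen_interior p hpint
      have hw : p + (ε / 2) • u ∈ A := interior_subset (hεball (by
        rw [mem_ball, dist_eq_norm]
        have : p + (ε / 2) • u - p = (ε / 2) • u := by abel
        rw [this, norm_smul, Real.norm_eq_abs, abs_of_pos (by linarith), hu1, mul_one]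
        linarith))
      have := hupx _ hw
      have e1 : p + (ε / 2) • u - p = (ε / 2) • u := by abel
      rw [e1, real_inner_smul_right, real_inner_self_eq_norm_sq, hu1] at this
      nlinarith
    obtain ⟨c₀, hc₀S, hc₀d⟩ := h3 p hpfr
    have hpc₀ : ‖p - c₀‖ = 1 := by rw [← dist_eq_norm]; exact hc₀d
    set h : ℝ := ⟪u, c₀ - p⟫ with hh
    have hq_expand : ∀ v : EuclideanSpace ℝ (Fin n),
        ‖q - v‖ ^ 2 = d ^ 2 + 2 * d * ⟪u, p - v⟫ + ‖p - v‖ ^ 2 := by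
      intro v
      have e1 : q - v = d • u + (p - v) := by rw [← hqp]; abel
      rw [e1, norm_add_sq_real, real_inner_smul_left, norm_smul, Real.norm_eq_abs,
        mul_pow, sq_abs, hu1]
      ring
    by_cases hh0 : h ≤ 0
    · -- far case: c₀ itself works
      have e1 : ‖q - c₀‖ ^ 2 = d ^ 2 + 2 * d * (-h) + 1 := by
        rw [hq_expand c₀, hpc₀]
        have : ⟪u, p - c₀⟫ = -h := by
          rw [hh, ← inner_neg_right]
          congr 1
          abel
        rw [this]; ring
      have h2 : dist q c₀ ≤ 1 := hqle c₀ hc₀S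
      rw [dist_eq_norm] at h2
      nlinarith [norm_nonneg (q - c₀)]
    · push_neg at hh0
      have hhle : h ≤ 1 := by
        have := real_inner_le_norm u (c₀ - p)
        rw [hu1, one_mul, norm_sub_rev] at this
        rw [hpc₀] at this
        rw [hh]
        exact this
      rcases eq_or_lt_of_le hhle with hh1 | hh1
      · -- h = 1 : A = {p}
        have hcop : c₀ - p = u := by
          have hz : ‖(c₀ - p) - u‖ ^ 2 = 0 := by
            have hcpu : ⟪c₀ - p, u⟫ = 1 := by rw [real_inner_comm, ← hh, hh1]
            rw [norm_sub_sq_real, norm_sub_rev, hpc₀, hu1, hcpu]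
            norm_num
          have := pow_eq_zero_iff (n := 2) (by norm_num) |>.mp hz
          rwa [norm_eq_zero, sub_eq_zero] at this
        have hxp : ∀ x ∈ A, x = p := by
          intro x hx
          have hxc : ‖x - c₀‖ ≤ 1 := by
            rw [← dist_eq_norm]; exact mem_closedBall.mp (hc₀S hx)
          have hiu : ⟪u, x - c₀⟫ ≤ -1 := by
            have e1 : x - c₀ = (x - p) - (c₀ - p) := by abel
            rw [e1, inner_sub_right, hcop, real_inner_self_eq_norm_sq, hu1]
            have := hupx x hx
            nlinarith
          have : ‖x - p‖ ^ 2 ≤ 0 := by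
            have e2 : x - p = (x - c₀) + (c₀ - p) := by abel
            rw [e2, norm_add_sq_real, hcop, hu1]
            have e3 : ⟪x - c₀, u⟫ = ⟪u, x - c₀⟫ := real_inner_comm _ _
            nlinarith [norm_nonneg (x - c₀)]
          have : x - p = 0 := by
            have h4 := sq_nonneg ‖x - p‖
            have : ‖x - p‖ ^ 2 = 0 := le_antisymm this h4
            have := pow_eq_zero_iff (n := 2) (by norm_num) |>.mp this
            rwa [norm_eq_zero] at this
          exact sub_eq_zero.mp this
        have hcS : (p - u) ∈ S := by
          intro x hx
          rw [hxp x hx]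
          refine mem_closedBall.mpr ?_
          rw [dist_eq_norm]
          have : p - (p - u) = u := by abel
          rw [this, hu1]
        have h5 : dist q (p - u) ≤ 1 := hqle _ hcS
        have : dist q (p - u) = d + 1 := by
          rw [dist_eq_norm]
          have e5 : q - (p - u) = d • u + u := by rw [← hqp]; abel
          have e6 : (d • u + u : EuclideanSpace ℝ (Fin n)) = (d + 1) • u := by module
          rw [e5, e6, norm_smul, Real.norm_eq_abs, abs_of_pos (by linarith), hu1, mul_one]
        linarith
      · -- 0 < h < 1
        set r : ℝ := Real.sqrt (1 - h ^ 2) with hr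
        have hargr : 0 < 1 - h ^ 2 := by nlinarith
        have hr0 : 0 < r := Real.sqrt_pos.mpr hargr
        have hrsq : r ^ 2 = 1 - h ^ 2 := Real.sq_sqrt hargr.le
        have hr1 : r < 1 := by nlinarith
        set c₁ : EuclideanSpace ℝ (Fin n) := c₀ - h • u with hc₁
        set c₃ : EuclideanSpace ℝ (Fin n) := p + r⁻¹ • (c₁ - p) with hc₃
        have hic : ⟪u, c₁ - p⟫ = 0 := by
          rw [hc₁]
          have e1 : c₀ - h • u - p = (c₀ - p) - h • u := by abel
          rw [e1, inner_sub_right, real_inner_smul_right, real_inner_self_eq_norm_sq, hu1, ← hh]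
          ring
        have hcpu : ⟪c₀ - p, u⟫ = h := by rw [real_inner_comm, ← hh]
        have hc₁p : ‖c₁ - p‖ ^ 2 = r ^ 2 := by
          rw [hc₁]
          have e1 : c₀ - h • u - p = (c₀ - p) - h • u := by abel
          rw [e1, norm_sub_sq_real, real_inner_smul_right, norm_smul, Real.norm_eq_abs,
            mul_pow, sq_abs, norm_sub_rev, hpc₀, hcpu, hu1, hrsq]
          ring
        have hc₁norm : ‖c₁ - p‖ = r := by
          calc ‖c₁ - p‖ = Real.sqrt (‖c₁ - p‖ ^ 2) := (Real.sqrt_sq (norm_nonneg _)).symm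
            _ = Real.sqrt (r ^ 2) := by rw [hc₁p]
            _ = r := Real.sqrt_sq hr0.le
        have hinvr : 1 ≤ r⁻¹ := by
          rw [le_inv_comm₀ one_pos hr0]
          simpa using hr1.le
        have hc₃S : c₃ ∈ S := by
          intro x hx
          have hxc₀ : ‖x - c₀‖ ≤ 1 := by
            rw [← dist_eq_norm]; exact mem_closedBall.mp (hc₀S hx)
          have hiux : ⟪u, x - c₀⟫ ≤ -h := by
            have e7 : x - c₀ = (x - p) - (c₀ - p) := by abel
            rw [e7, inner_sub_right, ← hh]
            have := hupx x hx
            linarith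
          have hxc₁sq : ‖x - c₁‖ ^ 2 ≤ r ^ 2 := by
            have e8 : x - c₁ = (x - c₀) + h • u := by rw [hc₁]; abel
            rw [e8, norm_add_sq_real, real_inner_smul_right, norm_smul, Real.norm_eq_abs,
              mul_pow, sq_abs, hu1, hrsq]
            have e9 : ⟪x - c₀, u⟫ = ⟪u, x - c₀⟫ := real_inner_comm _ _
            nlinarith [norm_nonneg (x - c₀), hh0]
          have hxc₁ : ‖x - c₁‖ ≤ r := by
            nlinarith [norm_nonneg (x - c₁), hr0]
          have hcc : ‖c₁ - c₃‖ = 1 - r := by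
            have e8 : c₁ - c₃ = (1 - r⁻¹) • (c₁ - p) := by rw [hc₃]; module
            rw [e8, norm_smul, Real.norm_eq_abs, hc₁norm,
              abs_of_nonpos (by linarith : 1 - r⁻¹ ≤ 0)]
            field_simp
            ring
          refine mem_closedBall.mpr ?_
          calc dist x c₃ ≤ dist x c₁ + dist c₁ c₃ := dist_triangle x c₁ c₃
            _ = ‖x - c₁‖ + ‖c₁ - c₃‖ := by rw [dist_eq_norm, dist_eq_norm]
            _ ≤ r + (1 - r) := by rw [hcc]; linarith
            _ = 1 := by ring
        have hq3 : dist q c₃ ≤ 1 := hqle c₃ hc₃S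
        have hqc₃ : ‖q - c₃‖ ^ 2 = d ^ 2 + 1 := by
          rw [hq_expand c₃]
          have e10 : p - c₃ = (-r⁻¹) • (c₁ - p) := by rw [hc₃]; module
          rw [e10, real_inner_smul_right, hic, norm_smul, Real.norm_eq_abs, mul_pow, sq_abs,
            hc₁p]
          have : ((-r⁻¹) ^ 2 * r ^ 2 : ℝ) = 1 := by
            field_simp
          rw [this]; ring
        rw [dist_eq_norm] at hq3
        nlinarith [norm_nonneg (q - c₃)]
  exact ⟨⟨h12, h21⟩, ⟨h23, h32⟩⟩
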